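/- Let $\hat\Sigma \succ 0$, $\bar X \in \mathbb{R}^J$, $c \ge 0$, $n > 0$, and $E = \{m : n(m-\bar X)^\top\hat\Sigma^{-1}(m-\bar X) \le c\}$. Then $\inf_{m \in E} \max_{1\le j\le J} m_j = \max_{w \in \Delta_J} \left\{ w^\top \bar X - \sqrt{c/n}\,\sqrt{w^\top \hat\Sigma w} \right\}$, where $\Delta_J$ is the probability simplex. -/

import Mathlib

open Matrix BigOperators Finset

private lemma dot_symm' {J : ℕ} {M : Matrix (Fin J) (Fin J) ℝ} (hM : M.IsHermitian)
    (u v : Fin J → ℝ) : u ⬝ᵥ M *ᵥ v = v ⬝ᵥ M *ᵥ u := by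
  have hT : Mᵀ = M := by simpa [Matrix.conjTranspose_eq_transpose_of_trivial] using hM.eq
  rw [dotProduct_mulVec, dotProduct_comm]
  congr 1
  rw [← hT, vecMul_transpose, hT]

private lemma qf_expand' {J : ℕ} {M : Matrix (Fin J) (Fin J) ℝ} (hM : M.IsHermitian)
    (u v : Fin J → ℝ) (e : ℝ) :
    (u + e • v) ⬝ᵥ M *ᵥ (u + e • v)
      = u ⬝ᵥ M *ᵥ u + 2*e*(v ⬝ᵥ M *ᵥ u) + e^2*(v ⬝ᵥ M *ᵥ v) := by
  simp only [mulVec_add, mulVec_smul, add_dotProduct, dotProduct_add, smul_dotProduct,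
    dotProduct_smul, smul_eq_mul, dot_symm' hM v u]
  ring

private lemma cs' {J : ℕ} {M : Matrix (Fin J) (Fin J) ℝ} (hM : M.PosDef)
    (w v : Fin J → ℝ) : (w ⬝ᵥ v)^2 ≤ (w ⬝ᵥ M *ᵥ w) * (v ⬝ᵥ M⁻¹ *ᵥ v) := by
  have hdet : IsUnit M.det := (hM.det_pos.ne').isUnit
  set u := M⁻¹ *ᵥ v with hu
  have hMu : M *ᵥ u = v := by
    rw [hu, mulVec_mulVec, Matrix.mul_nonsing_inv M hdet, Matrix.one_mulVec]
  have huMu : u ⬝ᵥ M *ᵥ u = v ⬝ᵥ M⁻¹ *ᵥ v := by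
    rw [hMu, dotProduct_comm]
  have hwMu : u ⬝ᵥ M *ᵥ w = w ⬝ᵥ v := by
    rw [dot_symm' hM.1, hMu]
  have hq : ∀ x : ℝ, 0 ≤ (v ⬝ᵥ M⁻¹ *ᵥ v) * (x*x) + (2*(w ⬝ᵥ v)) * x + (w ⬝ᵥ M *ᵥ w) := by
    intro x
    have h0 : 0 ≤ (w + x • u) ⬝ᵥ M *ᵥ (w + x • u) := by
      simpa using hM.posSemidef.dotProduct_mulVec_nonneg (w + x • u)
    rw [qf_expand' hM.1, hwMu, huMu] at h0
    nlinarith [h0]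
  have := discrim_le_zero hq
  rw [discrim] at this
  nlinarith [this]

private lemma sqrt_add_le' {a b : ℝ} (ha : 0 < a) (hab : 0 ≤ a + b) :
    Real.sqrt (a + b) ≤ Real.sqrt a + b / (2 * Real.sqrt a) := by
  have hsa : 0 < Real.sqrt a := Real.sqrt_pos.mpr ha
  have hsq : Real.sqrt a ^ 2 = a := Real.sq_sqrt ha.le
  have h2a : Real.sqrt a * Real.sqrt a = a := Real.mul_self_sqrt ha.le
  have hy : Real.sqrt a + b / (2 * Real.sqrt a) = (2*a + b) / (2 * Real.sqrt a) := by
    field_simp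
    linear_combination 2 * h2a
  rw [hy, Real.sqrt_le_iff]
  refine ⟨div_nonneg (by linarith) (by positivity), ?_⟩
  have hsq4 : (2 * Real.sqrt a)^2 = 4*a := by rw [mul_pow, hsq]; ring
  rw [div_pow, hsq4, le_div_iff₀ (by linarith)]
  nlinarith [sq_nonneg b]

private lemma cont_qf' {J : ℕ} (M : Matrix (Fin J) (Fin J) ℝ) :
    Continuous fun w : Fin J → ℝ => w ⬝ᵥ M *ᵥ w := by
  simp only [dotProduct, mulVec]
  exact continuous_finset_sum _ fun i _ =>
    (continuous_apply i).mul (continuous_finset_sum _ fun j _ =>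
      continuous_const.mul (continuous_apply j))

private lemma cont_lin' {J : ℕ} (X : Fin J → ℝ) :
    Continuous fun w : Fin J → ℝ => w ⬝ᵥ X := by
  simp only [dotProduct]
  exact continuous_finset_sum _ fun i _ => (continuous_apply i).mul continuous_const

private lemma dot_le_sup' {J : ℕ} [NeZero J] (w m : Fin J → ℝ)
    (hw0 : ∀ j, 0 ≤ w j) (hw1 : ∑ j, w j = 1) :
    w ⬝ᵥ m ≤ Finset.univ.sup' Finset.univ_nonempty m := by
  calc w ⬝ᵥ m = ∑ j, w j * m j := rfl
    _ ≤ ∑ j, w j * (Finset.univ.sup' Finset.univ_nonempty m) :=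
        Finset.sum_le_sum fun j _ => mul_le_mul_of_nonneg_left
          (Finset.le_sup' m (Finset.mem_univ j)) (hw0 j)
    _ = Finset.univ.sup' Finset.univ_nonempty m := by rw [← Finset.sum_mul, hw1, one_mul]

set_option maxHeartbeats 1000000 in
theorem stmt13 (J : ℕ) [NeZero J] (Sig : Matrix (Fin J) (Fin J) ℝ)
    (hSig : Sig.PosDef) (Xbar : Fin J → ℝ) (c n : ℝ) (hc : 0 ≤ c) (hn : 0 < n) :
    sInf {x : ℝ | ∃ m : Fin J → ℝ,
        n * ((m - Xbar) ⬝ᵥ Sig⁻¹.mulVec (m - Xbar)) ≤ c ∧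
        x = Finset.univ.sup' Finset.univ_nonempty m}
      = sSup {y : ℝ | ∃ w : Fin J → ℝ, (∀ j, 0 ≤ w j) ∧ (∑ j, w j = 1) ∧
          y = w ⬝ᵥ Xbar - Real.sqrt (c / n) * Real.sqrt (w ⬝ᵥ Sig.mulVec w)} := by
  classical
  have hcn : 0 ≤ c / n := div_nonneg hc hn.le
  set t := Real.sqrt (c / n) with ht_def
  have ht : 0 ≤ t := Real.sqrt_nonneg _
  have ht2 : t ^ 2 = c / n := Real.sq_sqrt hcn
  set f : (Fin J → ℝ) → ℝ := fun w => w ⬝ᵥ Xbar - t * Real.sqrt (w ⬝ᵥ Sig.mulVec w)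
    with hf_def
  set S1 := {x : ℝ | ∃ m : Fin J → ℝ,
      n * ((m - Xbar) ⬝ᵥ Sig⁻¹.mulVec (m - Xbar)) ≤ c ∧
      x = Finset.univ.sup' Finset.univ_nonempty m} with hS1
  set S2 := {y : ℝ | ∃ w : Fin J → ℝ, (∀ j, 0 ≤ w j) ∧ (∑ j, w j = 1) ∧
      y = w ⬝ᵥ Xbar - t * Real.sqrt (w ⬝ᵥ Sig.mulVec w)} with hS2
  have hdet : IsUnit Sig.det := (hSig.det_pos.ne').isUnit
  -- weak duality
  have hdual : ∀ x ∈ S1, ∀ y ∈ S2, y ≤ x := by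
    rintro x ⟨m, hm, rfl⟩ y ⟨w, hw0, hw1, rfl⟩
    set v := m - Xbar with hv_def
    have hq0 : 0 ≤ w ⬝ᵥ Sig *ᵥ w := by simpa using hSig.posSemidef.dotProduct_mulVec_nonneg w
    have hv0 : 0 ≤ v ⬝ᵥ Sig⁻¹ *ᵥ v := by simpa using hSig.inv.posSemidef.dotProduct_mulVec_nonneg v
    have hvc : v ⬝ᵥ Sig⁻¹ *ᵥ v ≤ c / n := by
      rw [le_div_iff₀ hn]; linarith [hm]
    have hcs : (w ⬝ᵥ v) ^ 2 ≤ (w ⬝ᵥ Sig *ᵥ w) * (v ⬝ᵥ Sig⁻¹ *ᵥ v) := cs' hSig w v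
    have h1 : (w ⬝ᵥ v) ^ 2 ≤ (Real.sqrt (w ⬝ᵥ Sig *ᵥ w) * t) ^ 2 := by
      rw [mul_pow, Real.sq_sqrt hq0, ht2]
      exact hcs.trans (mul_le_mul_of_nonneg_left hvc hq0)
    have h3 : |w ⬝ᵥ v| ≤ Real.sqrt (w ⬝ᵥ Sig *ᵥ w) * t := by
      rw [← Real.sqrt_sq_eq_abs]
      calc Real.sqrt ((w ⬝ᵥ v) ^ 2) ≤ Real.sqrt ((Real.sqrt (w ⬝ᵥ Sig *ᵥ w) * t) ^ 2) :=
            Real.sqrt_le_sqrt h1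
        _ = Real.sqrt (w ⬝ᵥ Sig *ᵥ w) * t := Real.sqrt_sq (by positivity)
    have hkey : -(t * Real.sqrt (w ⬝ᵥ Sig *ᵥ w)) ≤ w ⬝ᵥ v := by
      have := neg_abs_le (w ⬝ᵥ v)
      nlinarith [h3]
    have hwm : w ⬝ᵥ m = w ⬝ᵥ Xbar + w ⬝ᵥ v := by
      rw [hv_def, dotProduct_sub]; ring
    have hsup := dot_le_sup' w m hw0 hw1
    have : w ⬝ᵥ Xbar - t * Real.sqrt (w ⬝ᵥ Sig *ᵥ w) ≤ w ⬝ᵥ m := by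
      rw [hwm]; linarith
    linarith
  -- nonemptiness
  have hne1 : S1.Nonempty := by
    refine ⟨Finset.univ.sup' Finset.univ_nonempty Xbar, Xbar, ?_, rfl⟩
    simp [hc]
  have hw0mem : (fun _ : Fin J => (J : ℝ)⁻¹) ∈ stdSimplex ℝ (Fin J) := by
    constructor
    · intro i; positivity
    · simp [Finset.sum_const, Finset.card_univ]
  have hne2 : S2.Nonempty :=
    ⟨f (fun _ => (J : ℝ)⁻¹), fun _ => (J : ℝ)⁻¹, hw0mem.1, hw0mem.2, rfl⟩
  have hbdd2 : BddAbove S2 := by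
    obtain ⟨x0, hx0⟩ := hne1
    exact ⟨x0, fun y hy => hdual x0 hx0 y hy⟩
  have hbdd1 : BddBelow S1 := by
    obtain ⟨y0, hy0⟩ := hne2
    exact ⟨y0, fun x hx => hdual x hx y0 hy0⟩
  -- maximizer on the simplex
  have hfcont : Continuous f :=
    (cont_lin' Xbar).sub (continuous_const.mul (Real.continuous_sqrt.comp (cont_qf' Sig)))
  obtain ⟨w, hwS, hwmax⟩ := (isCompact_stdSimplex ℝ (Fin J)).exists_isMaxOn
    ⟨fun _ => (J : ℝ)⁻¹, hw0mem⟩ hfcont.continuousOn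
  obtain ⟨hwpos, hwsum⟩ := hwS
  have hwne : w ≠ 0 := by
    intro h
    rw [h] at hwsum
    simp at hwsum
  have hqpos : 0 < w ⬝ᵥ Sig *ᵥ w := by simpa using hSig.dotProduct_mulVec_pos hwne
  set q := w ⬝ᵥ Sig *ᵥ w with hq_def
  set s := Real.sqrt q with hs_def
  have hspos : 0 < s := Real.sqrt_pos.mpr hqpos
  have hs2 : s ^ 2 = q := Real.sq_sqrt hqpos.le
  set a := t / s with ha_def
  set m := Xbar - a • (Sig *ᵥ w) with hm_def
  have hinv : Sig⁻¹ *ᵥ (Sig *ᵥ w) = w := by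
    rw [mulVec_mulVec, Matrix.nonsing_inv_mul _ hdet, Matrix.one_mulVec]
  -- m is in the ellipsoid
  have hmv : m - Xbar = (-a) • (Sig *ᵥ w) := by
    rw [hm_def]; ext i; simp
  have hmell : n * ((m - Xbar) ⬝ᵥ Sig⁻¹.mulVec (m - Xbar)) ≤ c := by
    have hval : (m - Xbar) ⬝ᵥ Sig⁻¹ *ᵥ (m - Xbar) = a ^ 2 * q := by
      rw [hmv]
      rw [smul_dotProduct, mulVec_smul, dotProduct_smul, hinv]
      have : (Sig *ᵥ w) ⬝ᵥ w = q := by rw [dotProduct_comm, hq_def]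
      rw [this, smul_eq_mul, smul_eq_mul]
      ring
    have haq : a ^ 2 * q = c / n := by
      rw [ha_def, div_pow, ht2, ← hs2]
      field_simp
    rw [show Sig⁻¹.mulVec (m - Xbar) = Sig⁻¹ *ᵥ (m - Xbar) from rfl, hval, haq]
    rw [mul_div_cancel₀ c hn.ne']
  -- w ⬝ᵥ m = f w
  have hwm : w ⬝ᵥ m = f w := by
    rw [hm_def, hf_def]
    simp only [dotProduct_sub, dotProduct_smul, smul_eq_mul]
    rw [← hq_def, ← hs_def, ha_def]
    field_simp
    linear_combination t * hs2
  -- KKT: every coordinate of m is at most f w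
  have hKKT : ∀ j, m j ≤ f w := by
    intro j
    by_contra hj
    push_neg at hj
    set δ := m j - f w with hδ_def
    have hδpos : 0 < δ := by rw [hδ_def]; linarith
    set d := Pi.single j 1 - w with hd_def
    have hd0 : 0 ≤ d ⬝ᵥ Sig *ᵥ d := by simpa using hSig.posSemidef.dotProduct_mulVec_nonneg d
    set D := t * (d ⬝ᵥ Sig *ᵥ d) / (2 * s) with hD_def
    have hD0 : 0 ≤ D := by positivity
    set ε := min 1 (δ / (D + 1)) with hε_def
    have hε0 : 0 < ε := lt_min one_pos (by positivity)
    have hε1 : ε ≤ 1 := min_le_left _ _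
    have hεD : ε * D < δ := by
      have h1 : ε ≤ δ / (D + 1) := min_le_right _ _
      have h2 : ε * (D + 1) ≤ δ := by
        rw [← le_div_iff₀ (by linarith : (0:ℝ) < D + 1)]
        exact h1
      nlinarith
    set w' := w + ε • d with hw'_def
    have hw'mem : w' ∈ stdSimplex ℝ (Fin J) := by
      constructor
      · intro i
        have hsi : (0:ℝ) ≤ (Pi.single j 1 : Fin J → ℝ) i := by
          rw [Pi.single_apply]; split_ifs <;> norm_num
        have hwi : w' i = (1 - ε) * w i + ε * (Pi.single j 1 : Fin J → ℝ) i := by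
          simp only [hw'_def, hd_def, Pi.add_apply, Pi.smul_apply, Pi.sub_apply, smul_eq_mul]
          ring
        rw [hwi]
        have := hwpos i
        nlinarith
      · have hsingle : ∑ i, (Pi.single j 1 : Fin J → ℝ) i = 1 := by simp
        have hsum' : ∑ i, w' i
            = ∑ i, w i + ε * (∑ i, (Pi.single j 1 : Fin J → ℝ) i - ∑ i, w i) := by
          simp only [hw'_def, hd_def, Pi.add_apply, Pi.smul_apply, Pi.sub_apply, smul_eq_mul,
            mul_sub, Finset.sum_add_distrib, Finset.sum_sub_distrib, ← Finset.mul_sum]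
        rw [hsum', hsingle, hwsum]; ring
    -- expansion of the quadratic form
    have hq' : w' ⬝ᵥ Sig *ᵥ w' = q + (2 * ε * (d ⬝ᵥ Sig *ᵥ w) + ε ^ 2 * (d ⬝ᵥ Sig *ᵥ d)) := by
      rw [hw'_def, qf_expand' hSig.1, ← hq_def]; ring
    have hq'0 : 0 ≤ w' ⬝ᵥ Sig *ᵥ w' := by simpa using hSig.posSemidef.dotProduct_mulVec_nonneg w'
    have hsqrt : Real.sqrt (w' ⬝ᵥ Sig *ᵥ w')
        ≤ s + (2 * ε * (d ⬝ᵥ Sig *ᵥ w) + ε ^ 2 * (d ⬝ᵥ Sig *ᵥ d)) / (2 * s) := by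
      rw [hq']
      exact sqrt_add_le' hqpos (by rw [← hq']; exact hq'0)
    -- d ⬝ᵥ m = δ
    have hdm : d ⬝ᵥ m = δ := by
      rw [hd_def, sub_dotProduct, single_dotProduct, one_mul, hwm, hδ_def]
    have hdm2 : d ⬝ᵥ m = d ⬝ᵥ Xbar - a * (d ⬝ᵥ Sig *ᵥ w) := by
      rw [hm_def, dotProduct_sub, dotProduct_smul, smul_eq_mul]
    -- lower bound on f w'
    have hfw' : f w + ε * δ - ε ^ 2 * (t * (d ⬝ᵥ Sig *ᵥ d) / (2 * s)) ≤ f w' := by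
      have hlin : w' ⬝ᵥ Xbar = w ⬝ᵥ Xbar + ε * (d ⬝ᵥ Xbar) := by
        rw [hw'_def, add_dotProduct, smul_dotProduct, smul_eq_mul]
      have hδeq : ε * (d ⬝ᵥ Xbar) - ε * (t * (d ⬝ᵥ Sig *ᵥ w) / s) = ε * δ := by
        rw [← hdm, hdm2, ha_def]
        field_simp
      have hbound : t * Real.sqrt (w' ⬝ᵥ Sig *ᵥ w')
          ≤ t * s + ε * (t * (d ⬝ᵥ Sig *ᵥ w) / s) + ε ^ 2 * (t * (d ⬝ᵥ Sig *ᵥ d) / (2 * s)) := by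
        have := mul_le_mul_of_nonneg_left hsqrt ht
        have hexp : t * (s + (2 * ε * (d ⬝ᵥ Sig *ᵥ w) + ε ^ 2 * (d ⬝ᵥ Sig *ᵥ d)) / (2 * s))
            = t * s + ε * (t * (d ⬝ᵥ Sig *ᵥ w) / s) + ε ^ 2 * (t * (d ⬝ᵥ Sig *ᵥ d) / (2 * s)) := by
          field_simp
          ring
        linarith [hexp ▸ this]
      have : f w' = w' ⬝ᵥ Xbar - t * Real.sqrt (w' ⬝ᵥ Sig *ᵥ w') := rfl
      rw [this, hlin]
      have hfw : f w = w ⬝ᵥ Xbar - t * s := by rw [hf_def]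
      rw [hfw]
      linarith
    have hcontra : f w' ≤ f w := isMaxOn_iff.mp hwmax w' hw'mem
    have hε2D : ε ^ 2 * (t * (d ⬝ᵥ Sig *ᵥ d) / (2 * s)) = ε * (ε * D) := by
      rw [hD_def]; ring
    rw [hε2D] at hfw'
    nlinarith
  -- sup' m = f w
  have hsupm : Finset.univ.sup' Finset.univ_nonempty m = f w := by
    apply le_antisymm
    · exact Finset.sup'_le _ _ fun j _ => hKKT j
    · rw [← hwm]; exact dot_le_sup' w m hwpos hwsum
  have hfwS2 : f w ∈ S2 := ⟨w, hwpos, hwsum, rfl⟩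
  have hsSup : sSup S2 = f w := by
    apply le_antisymm
    · refine csSup_le hne2 ?_
      rintro y ⟨w'', h0, h1, rfl⟩
      exact isMaxOn_iff.mp hwmax w'' ⟨h0, h1⟩
    · exact le_csSup hbdd2 hfwS2
  apply le_antisymm
  · calc sInf S1 ≤ Finset.univ.sup' Finset.univ_nonempty m :=
        csInf_le hbdd1 ⟨m, hmell, rfl⟩
      _ = f w := hsupm
      _ = sSup S2 := hsSup.symm
  · exact le_csInf hne1 fun x hx => csSup_le hne2 fun y hy => hdual x hx y hy
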